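/- (Auslander) Let X be a separable, locally compact, metrizable topological space and let D ⊆ X × X be a closed quasi-order on X. If (x,y) ∉ D, then there exists a continuous function L : X → ℝ such that L(a) ≥ L(b) for every (a,b) ∈ D, and L(x) < L(y). -/

import Mathlib

open Set Topology Filter

set_option linter.unusedSectionVars false
set_option maxHeartbeats 1000000

section CompactOrder

variable {T : Type*} [TopologicalSpace T] [CompactSpace T] [T2Space T]

variable (E : Set (T × T))

def IsDownSet (S : Set T) : Prop := ∀ ⦃a b : T⦄, (a, b) ∈ E → a ∈ S → b ∈ S

def dcl (S : Set T) : Set T := S ∪ (Prod.snd '' (E ∩ (S ×ˢ (univ : Set T))))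

lemma mem_dcl {S : Set T} {b : T} :
    b ∈ dcl E S ↔ b ∈ S ∨ ∃ a ∈ S, (a, b) ∈ E := by
  simp only [dcl, mem_union, mem_image, mem_inter_iff, mem_prod, mem_univ, and_true,
    Prod.exists]
  constructor
  · rintro (h | ⟨a, b', ⟨hE', hS⟩, rfl⟩)
    · exact Or.inl h
    · exact Or.inr ⟨a, hS, hE'⟩
  · rintro (h | ⟨a, hS, hE'⟩)
    · exact Or.inl h
    · exact Or.inr ⟨a, b, ⟨hE', hS⟩, rfl⟩

lemma subset_dcl {S : Set T} : S ⊆ dcl E S := subset_union_left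

lemma isClosed_dcl (hE : IsClosed E) {S : Set T} (hS : IsClosed S) :
    IsClosed (dcl E S) := by
  refine hS.union ?_
  have hcomp : IsCompact (E ∩ (S ×ˢ (univ : Set T))) :=
    (hE.inter (hS.prod isClosed_univ)).isCompact
  exact (hcomp.image continuous_snd).isClosed

lemma isDownSet_dcl (htr : ∀ a b c : T, (a, b) ∈ E → (b, c) ∈ E → (a, c) ∈ E)
    {S : Set T} : IsDownSet E (dcl E S) := by
  intro a b hab ha
  rcases (mem_dcl E).1 ha with h | ⟨a', ha', haa'⟩
  · exact (mem_dcl E).2 (Or.inr ⟨a, h, hab⟩)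
  · exact (mem_dcl E).2 (Or.inr ⟨a', ha', htr _ _ _ haa' hab⟩)

lemma exists_downSet_nbhd (hE : IsClosed E)
    (htr : ∀ a b c : T, (a, b) ∈ E → (b, c) ∈ E → (a, c) ∈ E)
    {S W : Set T} (hS : IsClosed S) (hSd : IsDownSet E S) (hW : IsOpen W) (hSW : S ⊆ W) :
    ∃ C : Set T, IsClosed C ∧ IsDownSet E C ∧ S ⊆ interior C ∧ C ⊆ W := by
  set Bad : Set T := Prod.fst '' (E ∩ ((univ : Set T) ×ˢ Wᶜ)) with hBad
  have hBadClosed : IsClosed Bad :=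
    ((hE.inter (isClosed_univ.prod (hW.isClosed_compl))).isCompact.image
      continuous_fst).isClosed
  have hSdisj : S ⊆ (Bad ∪ Wᶜ)ᶜ := by
    intro s hs
    simp only [mem_compl_iff, mem_union, not_or]
    constructor
    · rintro ⟨⟨a, b⟩, ⟨hab, -, hb⟩, rfl⟩
      exact hb (hSW (hSd hab hs))
    · exact fun h => h (hSW hs)
  obtain ⟨V, hVo, hSV, hVc⟩ := normal_exists_closure_subset hS
    (hBadClosed.union hW.isClosed_compl).isOpen_compl hSdisj
  refine ⟨dcl E (closure V), isClosed_dcl E hE isClosed_closure, isDownSet_dcl E htr, ?_, ?_⟩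
  · exact hSV.trans (interior_maximal ((subset_closure).trans (subset_dcl E)) hVo)
  · intro z hz
    rcases (mem_dcl E).1 hz with h | ⟨a, ha, haz⟩
    · by_contra hzW
      exact (hVc h) (Or.inr hzW)
    · by_contra hzW
      exact (hVc ha) (Or.inl ⟨(a, z), ⟨haz, mem_univ _, hzW⟩, rfl⟩)

/-- Urysohn-type lemma for a closed transitive relation on a compact Hausdorff space. -/
theorem urysohn_mono (hE : IsClosed E)
    (htr : ∀ a b c : T, (a, b) ∈ E → (b, c) ∈ E → (a, c) ∈ E)
    {A B : Set T} (hA : IsClosed A) (hB : IsClosed B) (hBd : IsDownSet E B)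
    (hdisj : ∀ z, z ∈ A → z ∈ B → False) :
    ∃ h : T → ℝ, Continuous h ∧ (∀ z, h z ∈ Icc (0:ℝ) 1) ∧
      (∀ a b : T, (a, b) ∈ E → h b ≤ h a) ∧ (∀ z ∈ B, h z = 0) ∧ (∀ z ∈ A, h z = 1) := by
  have hBA : B ⊆ Aᶜ := fun z hz hzA => hdisj z hzA hz
  obtain ⟨Ct, hCtc, hCtd, hBCt, hCtA⟩ :=
    exists_downSet_nbhd E hE htr hB hBd hA.isOpen_compl hBA
  set Inv : ℕ → (ℕ → Set T) → Prop := fun n f =>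
    f 0 = B ∧ (∀ k, 2^n ≤ k → f k = Ct) ∧ (∀ k, IsClosed (f k)) ∧
      (∀ k, IsDownSet E (f k)) ∧ (∀ k, k < 2^n → f k ⊆ interior (f (k+1))) with hInvdef
  have base : Inv 0 (fun k => if k = 0 then B else Ct) := by
    refine ⟨by simp, fun k hk => by
      have hk0 : k ≠ 0 := by omega
      simp [hk0], ?_, ?_, ?_⟩
    · intro k; by_cases h : k = 0 <;> simp [h, hB, hCtc]
    · intro k; by_cases h : k = 0 <;> simp only [h, if_pos, if_neg, reduceIte] <;>
        first | exact hBd | exact hCtd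
    · intro k hk
      have hk0 : k = 0 := by omega
      subst hk0
      simpa using hBCt
  have step : ∀ n (f : ℕ → Set T), Inv n f →
      ∃ g : ℕ → Set T, Inv (n+1) g ∧ ∀ k, g (2*k) = f k := by
    intro n f hf
    obtain ⟨hf0, hftop, hfc, hfd, hfnest⟩ := hf
    have hchoice : ∀ k, ∃ C : Set T,
        (k < 2^n → IsClosed C ∧ IsDownSet E C ∧ f k ⊆ interior C ∧ C ⊆ interior (f (k+1))) ∧
        (2^n ≤ k → C = Ct) := by
      intro k
      by_cases hk : k < 2^n
      · obtain ⟨C, h1, h2, h3, h4⟩ :=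
          exists_downSet_nbhd E hE htr (hfc k) (hfd k) isOpen_interior (hfnest k hk)
        exact ⟨C, fun _ => ⟨h1, h2, h3, h4⟩, fun h => absurd h (not_le.2 hk)⟩
      · exact ⟨Ct, fun h => absurd h hk, fun _ => rfl⟩
    choose c hc1 hc2 using hchoice
    have hpow : 2^(n+1) = 2 * 2^n := by ring
    refine ⟨fun j => if j % 2 = 0 then f (j / 2) else c (j / 2), ⟨?_, ?_, ?_, ?_, ?_⟩, ?_⟩
    · simpa using hf0
    · intro k hk
      rcases Nat.even_or_odd k with ⟨m, rfl⟩ | ⟨m, rfl⟩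
      · have h1 : (m + m) % 2 = 0 := by omega
        have h2 : (m + m) / 2 = m := by omega
        simp only [h1, h2, if_pos, reduceIte]
        exact hftop m (by omega)
      · have h1 : (2*m + 1) % 2 = 1 := by omega
        have h2 : (2*m + 1) / 2 = m := by omega
        simp only [h1, h2, if_neg, reduceIte, Nat.one_ne_zero]
        exact hc2 m (by omega)
    · intro k
      by_cases h : k % 2 = 0
      · simp only [h, reduceIte]; exact hfc _
      · simp only [h, reduceIte]
        by_cases hk : k / 2 < 2^n
        · exact (hc1 _ hk).1
        · rw [hc2 _ (le_of_not_gt hk)]; exact hCtc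
    · intro k
      by_cases h : k % 2 = 0
      · simp only [h, reduceIte]; exact hfd _
      · simp only [h, reduceIte]
        by_cases hk : k / 2 < 2^n
        · exact (hc1 _ hk).2.1
        · rw [hc2 _ (le_of_not_gt hk)]; exact hCtd
    · intro k hk
      rcases Nat.even_or_odd k with ⟨m, rfl⟩ | ⟨m, rfl⟩
      · have h1 : (m + m) % 2 = 0 := by omega
        have h2 : (m + m) / 2 = m := by omega
        have h3 : (m + m + 1) % 2 = 1 := by omega
        have h4 : (m + m + 1) / 2 = m := by omega
        have hm : m < 2^n := by omega
        simp only [h1, h2, h3, h4, reduceIte, Nat.one_ne_zero, if_neg, if_pos]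
        exact (hc1 m hm).2.2.1
      · have h1 : (2*m + 1) % 2 = 1 := by omega
        have h2 : (2*m + 1) / 2 = m := by omega
        have h3 : (2*m + 1 + 1) % 2 = 0 := by omega
        have h4 : (2*m + 1 + 1) / 2 = m + 1 := by omega
        have hm : m < 2^n := by omega
        simp only [h1, h2, h3, h4, reduceIte, Nat.one_ne_zero]
        exact (hc1 m hm).2.2.2
    · intro k
      have h1 : (2*k) % 2 = 0 := by omega
      have h2 : (2*k) / 2 = k := by omega
      simp [h1, h2]
  -- construct the dyadic family
  let famS : ∀ n : ℕ, {f : ℕ → Set T // Inv n f} := fun n =>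
    Nat.rec ⟨fun k => if k = 0 then B else Ct, base⟩
      (fun n p => ⟨(step n p.1 p.2).choose, (step n p.1 p.2).choose_spec.1⟩) n
  set fam : ℕ → ℕ → Set T := fun n => (famS n).1 with hfamdef
  have hInv : ∀ n, Inv n (fam n) := fun n => (famS n).2
  have hcoh : ∀ n k, fam (n+1) (2*k) = fam n k := fun n k =>
    (step n (famS n).1 (famS n).2).choose_spec.2 k
  have h0 : ∀ n, fam n 0 = B := fun n => (hInv n).1
  have htop : ∀ n k, 2^n ≤ k → fam n k = Ct := fun n => (hInv n).2.1
  have hcl : ∀ n k, IsClosed (fam n k) := fun n => (hInv n).2.2.1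
  have hdn : ∀ n k, IsDownSet E (fam n k) := fun n => (hInv n).2.2.2.1
  have hnest : ∀ n k, k < 2^n → fam n k ⊆ interior (fam n (k+1)) := fun n => (hInv n).2.2.2.2
  have hmono1 : ∀ n k, fam n k ⊆ fam n (k+1) := by
    intro n k
    by_cases hk : k < 2^n
    · exact (hnest n k hk).trans interior_subset
    · rw [htop n k (le_of_not_gt hk), htop n (k+1) (by omega)]
  have hmonok : ∀ n k j, fam n k ⊆ fam n (k + j) := by
    intro n k j
    induction j with
    | zero => exact subset_rfl
    | succ j ih => exact ih.trans (hmono1 n (k + j))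
  have hmonok' : ∀ n k k', k ≤ k' → fam n k ⊆ fam n k' := by
    intro n k k' h
    have : k' = k + (k' - k) := by omega
    rw [this]
    exact hmonok n k _
  have hsubCt : ∀ n k, fam n k ⊆ Ct := by
    intro n k
    rcases le_total (2^n) k with h | h
    · rw [htop n k h]
    · exact (hmonok' n k (2^n) h).trans (le_of_eq (htop n (2^n) le_rfl))
  -- index function
  set idx : ℕ → T → ℕ := fun n z => sInf {k | z ∈ fam n k ∨ 2^n ≤ k} with hidxdef
  have hidxne : ∀ n (z : T), (2^n) ∈ {k | z ∈ fam n k ∨ 2^n ≤ k} := fun n z => Or.inr le_rfl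
  have hidxle : ∀ n (z : T), idx n z ≤ 2^n := fun n z => Nat.sInf_le (hidxne n z)
  have hidxmem : ∀ n (z : T), z ∈ fam n (idx n z) ∨ 2^n ≤ idx n z := fun n z =>
    Nat.sInf_mem ⟨_, hidxne n z⟩
  have hidxmin : ∀ n (z : T) j, j < idx n z → z ∉ fam n j := fun n z j hj hzj =>
    Nat.notMem_of_lt_sInf hj (Or.inl hzj)
  have hidxle' : ∀ n (z : T) j, z ∈ fam n j → idx n z ≤ j := fun n z j hzj =>
    Nat.sInf_le (Or.inl hzj)
  have hidxstep1 : ∀ n (z : T), idx (n+1) z ≤ 2 * idx n z := by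
    intro n z
    rcases hidxmem n z with h | h
    · refine hidxle' (n+1) z _ ?_
      rw [hcoh n (idx n z)]; exact h
    · refine Nat.sInf_le (Or.inr ?_)
      have hp : 2^(n+1) = 2 * 2^n := by ring
      omega
  have hidxstep2 : ∀ n (z : T), 2 * idx n z ≤ idx (n+1) z + 1 := by
    intro n z
    by_contra hcon
    push_neg at hcon
    have h1 : 1 ≤ idx n z := by omega
    have h2 : idx (n+1) z ≤ 2 * (idx n z - 1) := by omega
    rcases hidxmem (n+1) z with h | h
    · have hmem : z ∈ fam (n+1) (2 * (idx n z - 1)) := hmonok' (n+1) _ _ h2 h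
      rw [hcoh] at hmem
      exact hidxmin n z _ (by omega) hmem
    · have hle := hidxle n z
      have hp : 2^(n+1) = 2 * 2^n := by ring
      omega
  -- real-valued approximations
  set r : ℕ → T → ℝ := fun n z => (idx n z : ℝ) / 2^n with hrdef
  have hrnonneg : ∀ n (z : T), 0 ≤ r n z := fun n z => by positivity
  have hrle1 : ∀ n (z : T), r n z ≤ 1 := by
    intro n z
    rw [hrdef]
    rw [div_le_one (by positivity)]
    exact_mod_cast hidxle n z
  have hdivmono : ∀ (n : ℕ) (a b : ℝ), a ≤ b → a/2^n ≤ b/2^n := by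
    intro n a b h
    have hp : (0:ℝ) < 2^n := by positivity
    rw [div_le_div_iff₀ hp hp]
    nlinarith
  have hrstep1 : ∀ n (z : T), r (n+1) z ≤ r n z := by
    intro n z
    have hcast : (idx (n+1) z : ℝ) ≤ 2 * idx n z := by exact_mod_cast hidxstep1 n z
    rw [hrdef, div_le_div_iff₀ (by positivity) (by positivity)]
    have h2 : (2:ℝ)^(n+1) = 2 * 2^n := by ring
    have hp : (0:ℝ) < 2^n := by positivity
    nlinarith
  have hrstep2 : ∀ n (z : T), r n z ≤ r (n+1) z + 1/2^(n+1) := by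
    intro n z
    have hcast : 2 * (idx n z : ℝ) ≤ idx (n+1) z + 1 := by exact_mod_cast hidxstep2 n z
    have h1 : r (n+1) z + 1/2^(n+1) = ((idx (n+1) z : ℝ) + 1) / 2^(n+1) := by
      rw [hrdef]; rw [add_div]
    rw [h1, hrdef, div_le_div_iff₀ (by positivity) (by positivity)]
    have h2 : (2:ℝ)^(n+1) = 2 * 2^n := by ring
    have hp : (0:ℝ) < 2^n := by positivity
    nlinarith
  have hrmono : ∀ (z : T) m n, m ≤ n → r n z ≤ r m z := by
    intro z m n h
    induction n with
    | zero => rw [Nat.le_zero.1 h]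
    | succ n ih =>
      rcases Nat.lt_or_ge m (n+1) with h' | h'
      · exact (hrstep1 n z).trans (ih (by omega))
      · have : m = n + 1 := by omega
        rw [this]
  have hrtail : ∀ (z : T) n m, n ≤ m → r n z ≤ r m z + 1/2^n := by
    intro z n m h
    have key : ∀ j, r n z ≤ r (n + j) z + (1/2^n - 1/2^(n+j)) := by
      intro j
      induction j with
      | zero => simp
      | succ j ih =>
        refine ih.trans ?_
        have h1 := hrstep2 (n+j) z
        have h2 : (1:ℝ)/2^(n+j+1) + (1/2^n - 1/2^(n+j)) = 1/2^n - 1/2^(n+j+1) := by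
          have e1 : (2:ℝ)^(n+j+1) = 2 * 2^(n+j) := by ring
          rw [e1]
          have hp : (0:ℝ) < 2^(n+j) := by positivity
          field_simp
          ring
        have : r (n+j) z ≤ r (n+j+1) z + (1/2^(n+j+1)) := h1
        calc r (n+j) z + (1/2^n - 1/2^(n+j))
            ≤ r (n+j+1) z + 1/2^(n+j+1) + (1/2^n - 1/2^(n+j)) := by linarith
          _ = r (n+(j+1)) z + (1/2^n - 1/2^(n+(j+1))) := by
              rw [show n+(j+1) = n+j+1 from rfl, ← h2]; ring
    have := key (m - n)
    have hm : n + (m - n) = m := by omega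
    rw [hm] at this
    have hp : (0:ℝ) ≤ 1/2^m := by positivity
    linarith
  have hbdd : ∀ z : T, BddBelow (range fun n => r n z) := by
    intro z
    exact ⟨0, by rintro w ⟨n, rfl⟩; exact hrnonneg n z⟩
  have hle : ∀ (z : T) n, (⨅ m, r m z) ≤ r n z := fun z n => ciInf_le (hbdd z) n
  have hge : ∀ (z : T) n, r n z - 1/2^n ≤ ⨅ m, r m z := by
    intro z n
    refine le_ciInf fun m => ?_
    rcases le_total n m with h | h
    · have := hrtail z n m h; linarith
    · have := hrmono z m n h
      have hp : (0:ℝ) ≤ 1/2^n := by positivity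
      linarith
  refine ⟨fun z => ⨅ n, r n z, ?_, ?_, ?_, ?_, ?_⟩
  · -- continuity
    rw [continuous_iff_continuousAt]
    intro z
    rw [ContinuousAt, Metric.tendsto_nhds]
    intro ε hε
    obtain ⟨n, hn⟩ : ∃ n : ℕ, (1:ℝ)/2^n < ε/4 := by
      obtain ⟨n, hn⟩ := exists_pow_lt_of_lt_one (show (0:ℝ) < ε/4 by linarith)
        (show (1:ℝ)/2 < 1 by norm_num)
      refine ⟨n, ?_⟩
      rw [div_pow, one_pow] at hn
      exact hn
    have hU1 : ∃ U1 : Set T, IsOpen U1 ∧ z ∈ U1 ∧ ∀ w ∈ U1, r n w ≤ r n z + 1/2^n := by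
      by_cases hk : idx n z < 2^n
      · refine ⟨interior (fam n (idx n z + 1)), isOpen_interior, ?_, ?_⟩
        · rcases hidxmem n z with h | h
          · exact hnest n _ hk h
          · omega
        · intro w hw
          have hmem : idx n w ≤ idx n z + 1 := hidxle' n w _ (interior_subset hw)
          have hcast : (idx n w : ℝ) ≤ (idx n z : ℝ) + 1 := by exact_mod_cast hmem
          have h2 : r n w = (idx n w : ℝ)/2^n := by simp only [hrdef]
          have h3 : r n z = (idx n z : ℝ)/2^n := by simp only [hrdef]
          rw [h2, h3, ← add_div]
          gcongr
      · refine ⟨univ, isOpen_univ, mem_univ _, ?_⟩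
        intro w _
        have hkz : idx n z = 2^n := by have := hidxle n z; omega
        have h1 : r n z = 1 := by
          have h3 : r n z = ((idx n z : ℝ))/2^n := by simp only [hrdef]
          rw [h3, hkz]
          push_cast
          rw [div_self (by positivity)]
        have := hrle1 n w
        have hp : (0:ℝ) ≤ 1/2^n := by positivity
        linarith
    have hU2 : ∃ U2 : Set T, IsOpen U2 ∧ z ∈ U2 ∧ ∀ w ∈ U2, r n z - 2/2^n ≤ r n w := by
      by_cases hk : 2 ≤ idx n z
      · refine ⟨(fam n (idx n z - 2))ᶜ, (hcl n _).isOpen_compl, ?_, ?_⟩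
        · exact hidxmin n z _ (by omega)
        · intro w hw
          have hidxw : idx n z - 1 ≤ idx n w := by
            by_contra hcon
            push_neg at hcon
            have h2 : idx n w ≤ idx n z - 2 := by omega
            rcases hidxmem n w with h | h
            · exact hw (hmonok' n _ _ h2 h)
            · have := hidxle n z; omega
          have hcast : (idx n z : ℝ) - 1 ≤ (idx n w : ℝ) := by
            have h3 : ((idx n z - 1 : ℕ) : ℝ) ≤ (idx n w : ℝ) := by exact_mod_cast hidxw
            rwa [Nat.cast_sub (by omega), Nat.cast_one] at h3
          have hp : (0:ℝ) < 2^n := by positivity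
          have h2 : r n w = (idx n w : ℝ)/2^n := by simp only [hrdef]
          have h3 : r n z = (idx n z : ℝ)/2^n := by simp only [hrdef]
          rw [h2, h3, div_sub_div_same]
          have hstep : ((idx n z : ℝ) - 2)/2^n ≤ ((idx n z : ℝ) - 1)/2^n :=
            hdivmono n _ _ (by linarith)
          exact hstep.trans (hdivmono n _ _ hcast)
      · refine ⟨univ, isOpen_univ, mem_univ _, ?_⟩
        intro w _
        have hcast : (idx n z : ℝ) ≤ 2 := by
          have : idx n z ≤ 2 := by omega
          exact_mod_cast this
        have hp : (0:ℝ) < 2^n := by positivity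
        have h1 : r n z ≤ 2/2^n := by
          have h3 : r n z = (idx n z : ℝ)/2^n := by simp only [hrdef]
          rw [h3]
          exact hdivmono n _ _ hcast
        have := hrnonneg n w
        linarith
    obtain ⟨U1, hU1o, hzU1, hU1b⟩ := hU1
    obtain ⟨U2, hU2o, hzU2, hU2b⟩ := hU2
    refine Filter.eventually_of_mem ((hU1o.inter hU2o).mem_nhds ⟨hzU1, hzU2⟩) ?_
    rintro w ⟨hw1, hw2⟩
    have b1 := hU1b w hw1
    have b2 := hU2b w hw2
    have hwle := hle w n
    have hwge := hge w n
    have hzle := hle z n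
    have hzge := hge z n
    rw [Real.dist_eq]
    have hp : (0:ℝ) < 1/2^n := by positivity
    have h22 : (2:ℝ)/2^n = 2*(1/2^n) := by ring
    rw [abs_lt]
    constructor <;> linarith
  · -- range
    intro z
    constructor
    · exact le_ciInf fun n => hrnonneg n z
    · exact (hle z 0).trans (hrle1 0 z)
  · -- monotone
    intro a b hab
    refine ciInf_mono (hbdd b) fun n => ?_
    have hidxab : idx n b ≤ idx n a := by
      rcases hidxmem n a with h | h
      · exact hidxle' n b _ (hdn n _ hab h)
      · exact (hidxle n b).trans h
    have h2 : r n b = (idx n b : ℝ)/2^n := by simp only [hrdef]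
    have h3 : r n a = (idx n a : ℝ)/2^n := by simp only [hrdef]
    rw [h2, h3]
    exact hdivmono n _ _ (by exact_mod_cast hidxab)
  · -- zero on B
    intro z hz
    have hidx0 : ∀ n, idx n z = 0 := by
      intro n
      have : z ∈ fam n 0 := by rw [h0 n]; exact hz
      have := hidxle' n z 0 this
      omega
    have hr0 : ∀ n, r n z = 0 := by
      intro n
      have h3 : r n z = (idx n z : ℝ)/2^n := by simp only [hrdef]
      rw [h3, hidx0 n]
      simp
    simp only [hr0, ciInf_const]
  · -- one on A
    intro z hz
    have hznCt : z ∉ Ct := fun h => hCtA h hz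
    have hidx1 : ∀ n, idx n z = 2^n := by
      intro n
      refine le_antisymm (hidxle n z) ?_
      rcases hidxmem n z with h | h
      · exact absurd (hsubCt n _ h) hznCt
      · exact h
    have hr1 : ∀ n, r n z = 1 := by
      intro n
      have h3 : r n z = (idx n z : ℝ)/2^n := by simp only [hrdef]
      rw [h3, hidx1 n]
      push_cast
      rw [div_self (by positivity)]
    simp only [hr1, ciInf_const]


/-- Approximate extension of a partially-monotone function to a fully monotone one. -/
theorem approx_mono_extend (hE : IsClosed E)
    (htr : ∀ a b c : T, (a, b) ∈ E → (b, c) ∈ E → (a, c) ∈ E)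
    {P : Set T} (hP : IsClosed P)
    (f : T → ℝ) (hf : Continuous f) (hf01 : ∀ z, f z ∈ Icc (0:ℝ) 1)
    (hfm : ∀ a b : T, (a, b) ∈ E → a ∈ P → b ∈ P → f b ≤ f a) (M : ℕ) (hM : 0 < M) :
    ∃ g : T → ℝ, Continuous g ∧ (∀ z, g z ∈ Icc (0:ℝ) 1) ∧
      (∀ a b : T, (a, b) ∈ E → g b ≤ g a) ∧ ∀ c ∈ P, |g c - f c| ≤ 1/M := by
  classical
  have hMR : (0:ℝ) < M := by exact_mod_cast hM
  have hdm : ∀ a b : ℝ, a ≤ b → a/M ≤ b/M := by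
    intro a b h
    rw [div_le_div_iff₀ hMR hMR]
    nlinarith
  have hchoice : ∀ k : ℕ, ∃ h : T → ℝ, Continuous h ∧ (∀ z, h z ∈ Icc (0:ℝ) 1) ∧
      (∀ a b : T, (a, b) ∈ E → h b ≤ h a) ∧
      (∀ z ∈ dcl E (P ∩ {z | f z ≤ (k:ℝ)/M}), h z = 0) ∧
      (∀ z ∈ P ∩ {z | ((k:ℝ)+1)/M ≤ f z}, h z = 1) := by
    intro k
    have hAc : IsClosed (P ∩ {z | ((k:ℝ)+1)/M ≤ f z}) :=
      hP.inter (isClosed_le continuous_const hf)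
    have hBc0 : IsClosed (P ∩ {z | f z ≤ (k:ℝ)/M}) :=
      hP.inter (isClosed_le hf continuous_const)
    have hBc : IsClosed (dcl E (P ∩ {z | f z ≤ (k:ℝ)/M})) := isClosed_dcl E hE hBc0
    have hBd : IsDownSet E (dcl E (P ∩ {z | f z ≤ (k:ℝ)/M})) := isDownSet_dcl E htr
    have hkk : ¬ (((k:ℝ)+1)/M ≤ (k:ℝ)/M) := by
      intro h
      rw [div_le_div_iff₀ hMR hMR] at h
      nlinarith
    have hdisj : ∀ z, z ∈ (P ∩ {z | ((k:ℝ)+1)/M ≤ f z}) →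
        z ∈ dcl E (P ∩ {z | f z ≤ (k:ℝ)/M}) → False := by
      rintro z ⟨hzP, hz1⟩ hz2
      rcases (mem_dcl E).1 hz2 with ⟨_, hz3⟩ | ⟨a, ⟨haP, ha3⟩, haz⟩
      · exact hkk (le_trans hz1 hz3)
      · have := hfm a z haz haP hzP
        exact hkk (le_trans (le_trans hz1 this) ha3)
    obtain ⟨h, hc, h01, hm, h0, h1⟩ := urysohn_mono E hE htr hAc hBc hBd hdisj
    exact ⟨h, hc, h01, hm, h0, h1⟩
  choose hh hhc hh01 hhm hh0 hh1 using hchoice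
  refine ⟨fun z => (∑ k ∈ Finset.range M, hh k z)/M, ?_, ?_, ?_, ?_⟩
  · exact (continuous_finset_sum _ fun k _ => hhc k).div_const _
  · intro z
    constructor
    · apply div_nonneg _ hMR.le
      exact Finset.sum_nonneg fun k _ => (hh01 k z).1
    · rw [div_le_one hMR]
      calc ∑ k ∈ Finset.range M, hh k z ≤ ∑ k ∈ Finset.range M, 1 :=
            Finset.sum_le_sum fun k _ => (hh01 k z).2
        _ = M := by simp
  · intro a b hab
    exact hdm _ _ (Finset.sum_le_sum fun k _ => hhm k a b hab)
  · intro c hcP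
    set t := f c with htdef
    have ht0 : 0 ≤ t := (hf01 c).1
    have ht1 : t ≤ 1 := (hf01 c).2
    set j : ℕ := ⌊t * M⌋₊ with hjdef
    have htM0 : 0 ≤ t * M := by positivity
    have hjle : (j:ℝ) ≤ t * M := Nat.floor_le htM0
    have hjgt : t * M < (j:ℝ) + 1 := Nat.lt_floor_add_one _
    have hjM : j ≤ M := by
      have h1 : t * M ≤ (M:ℝ) := by nlinarith
      have := Nat.floor_mono h1
      rwa [Nat.floor_natCast] at this
    have hlow : (j:ℝ) ≤ ∑ k ∈ Finset.range M, hh k c := by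
      have hsub : Finset.range j ⊆ Finset.range M := Finset.range_subset_range.2 hjM
      have hones : ∀ k ∈ Finset.range j, hh k c = 1 := by
        intro k hk
        rw [Finset.mem_range] at hk
        refine hh1 k c ⟨hcP, ?_⟩
        have hk1 : (k:ℝ) + 1 ≤ (j:ℝ) := by exact_mod_cast hk
        rw [mem_setOf_eq, div_le_iff₀ hMR]
        linarith
      have h1 : ∑ k ∈ Finset.range j, hh k c = (j:ℝ) := by
        rw [Finset.sum_congr rfl hones]
        simp
      rw [← h1]
      exact Finset.sum_le_sum_of_subset_of_nonneg hsub fun k _ _ => (hh01 k c).1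
    have hhigh : ∑ k ∈ Finset.range M, hh k c ≤ (j:ℝ) + 1 := by
      rcases le_or_gt M (j+1) with hMj | hMj
      · calc ∑ k ∈ Finset.range M, hh k c ≤ ∑ k ∈ Finset.range M, 1 :=
              Finset.sum_le_sum fun k _ => (hh01 k c).2
          _ = (M:ℝ) := by simp
          _ ≤ (j:ℝ) + 1 := by exact_mod_cast hMj
      · have hsplit : ∑ k ∈ Finset.Ico 0 (j+1), hh k c + ∑ k ∈ Finset.Ico (j+1) M, hh k c
            = ∑ k ∈ Finset.Ico 0 M, hh k c :=
          Finset.sum_Ico_consecutive _ (Nat.zero_le _) (by omega)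
        have hzero : ∀ k ∈ Finset.Ico (j+1) M, hh k c = 0 := by
          intro k hk
          rw [Finset.mem_Ico] at hk
          have hk1 : (j:ℝ) + 1 ≤ (k:ℝ) := by exact_mod_cast hk.1
          refine hh0 k c (subset_dcl E ⟨hcP, ?_⟩)
          rw [mem_setOf_eq, le_div_iff₀ hMR]
          linarith
        have h2 : ∑ k ∈ Finset.Ico (j+1) M, hh k c = 0 :=
          Finset.sum_eq_zero hzero
        have h3 : ∑ k ∈ Finset.Ico 0 (j+1), hh k c ≤ (j:ℝ) + 1 := by
          calc ∑ k ∈ Finset.Ico 0 (j+1), hh k c ≤ ∑ k ∈ Finset.Ico 0 (j+1), (1:ℝ) :=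
              Finset.sum_le_sum fun k _ => (hh01 k c).2
            _ = ((j:ℝ) + 1) := by
              rw [Finset.sum_const, Nat.card_Ico]
              simp
        rw [Finset.range_eq_Ico, ← hsplit, h2]
        linarith
    have habs : |(∑ k ∈ Finset.range M, hh k c) - t * M| ≤ 1 := by
      rw [abs_le]
      constructor <;> linarith
    have heq : (∑ k ∈ Finset.range M, hh k c)/M - t =
        ((∑ k ∈ Finset.range M, hh k c) - t * M)/M := by
      field_simp
    rw [heq, abs_div, abs_of_pos hMR]
    exact hdm _ _ habs

end CompactOrder

section Main

open TopologicalSpace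

lemma extend_from_compact {X : Type*} [TopologicalSpace X] [NormalSpace X]
    {S : Set X} (hS : IsClosed S) [CompactSpace ↥S] (h : ↥S → ℝ) (hc : Continuous h)
    (h01 : ∀ z, h z ∈ Icc (0:ℝ) 1) :
    ∃ L : X → ℝ, Continuous L ∧ (∀ z, L z ∈ Icc (0:ℝ) 1) ∧ ∀ z : ↥S, L (z : X) = h z := by
  obtain ⟨g, hg1, hg2⟩ :=
    BoundedContinuousFunction.exists_extension_forall_mem_Icc_of_isClosedEmbedding
      (BoundedContinuousFunction.mkOfCompact ⟨h, hc⟩) h01 (by norm_num)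
      hS.isClosedEmbedding_subtypeVal
  refine ⟨g, g.continuous, hg1, fun z => ?_⟩
  have := congrFun hg2 z
  simpa using this

theorem stmt_6 {X : Type*} [TopologicalSpace X]
    [TopologicalSpace.SeparableSpace X] [LocallyCompactSpace X]
    [TopologicalSpace.MetrizableSpace X]
    (D : Set (X × X))
    (hrefl : ∀ x : X, (x, x) ∈ D)
    (htrans : ∀ x y z : X, (x, y) ∈ D → (y, z) ∈ D → (x, z) ∈ D)
    (hclosed : IsClosed D)
    (x y : X) (hxy : (x, y) ∉ D) :
    ∃ L : X → ℝ, Continuous L ∧ (∀ p ∈ D, L p.1 ≥ L p.2) ∧ L x < L y := by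
  letI : MetricSpace X := TopologicalSpace.metrizableSpaceMetric X
  haveI : SecondCountableTopology X := UniformSpace.secondCountable_of_separable X
  haveI : SigmaCompactSpace X := inferInstance
  set K0 := CompactExhaustion.choice X with hK0
  obtain ⟨n₀, hxk⟩ := K0.exists_mem x
  obtain ⟨n₁, hyk⟩ := K0.exists_mem y
  set Q : ℕ → Set X := fun n => K0 (max n₀ n₁ + n) with hQ
  have hQc : ∀ n, IsCompact (Q n) := fun n => K0.isCompact _
  have hQcl : ∀ n, IsClosed (Q n) := fun n => (hQc n).isClosed
  have hQmono : ∀ m n : ℕ, m ≤ n → Q m ⊆ Q n := fun m n h => K0.subset (by omega)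
  have hQint : ∀ n, Q n ⊆ interior (Q (n+1)) := fun n => by
    have := K0.subset_interior_succ (max n₀ n₁ + n)
    simpa [hQ, add_assoc] using this
  have hQx : x ∈ Q 0 := K0.subset (by omega) hxk
  have hQy : y ∈ Q 0 := K0.subset (by omega) hyk
  have hQall : ∀ z : X, ∃ n, z ∈ Q n := by
    intro z
    obtain ⟨m, hm⟩ := K0.exists_mem z
    exact ⟨m, K0.subset (by omega) hm⟩
  set Good : ℕ → (X → ℝ) → Prop := fun n L => Continuous L ∧ (∀ z, L z ∈ Icc (0:ℝ) 1) ∧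
    (∀ a b : X, (a, b) ∈ D → a ∈ Q n → b ∈ Q n → L b ≤ L a) with hGood
  -- base function
  have hbase : ∃ L : X → ℝ, Good 0 L ∧ L x = 0 ∧ L y = 1 := by
    haveI : CompactSpace ↥(Q 0) := isCompact_iff_compactSpace.1 (hQc 0)
    set E0 : Set (↥(Q 0) × ↥(Q 0)) := {p | ((p.1 : X), (p.2 : X)) ∈ D} with hE0
    have hE0c : IsClosed E0 := by
      have he : E0 = (fun p : ↥(Q 0) × ↥(Q 0) => ((p.1 : X), (p.2 : X))) ⁻¹' D := rfl
      rw [he]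
      exact hclosed.preimage ((continuous_subtype_val.comp continuous_fst).prodMk
        (continuous_subtype_val.comp continuous_snd))
    have htr0 : ∀ a b c : ↥(Q 0), (a, b) ∈ E0 → (b, c) ∈ E0 → (a, c) ∈ E0 :=
      fun a b c h1 h2 => htrans _ _ _ h1 h2
    set A : Set ↥(Q 0) := {a | ((a : X), y) ∈ D} with hA
    set B : Set ↥(Q 0) := {b | (x, (b : X)) ∈ D} with hB
    have hAc : IsClosed A := by
      have : A = (fun a : ↥(Q 0) => ((a : X), y)) ⁻¹' D := rfl
      rw [this]
      exact hclosed.preimage (continuous_subtype_val.prodMk continuous_const)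
    have hBc : IsClosed B := by
      have : B = (fun b : ↥(Q 0) => (x, (b : X))) ⁻¹' D := rfl
      rw [this]
      exact hclosed.preimage (continuous_const.prodMk continuous_subtype_val)
    have hBd : IsDownSet E0 B := fun a b hab ha => htrans x _ _ ha hab
    have hdisj : ∀ z, z ∈ A → z ∈ B → False := fun z hzA hzB =>
      hxy (htrans _ _ _ hzB hzA)
    obtain ⟨h, hc, h01, hm, h0, h1⟩ := urysohn_mono E0 hE0c htr0 hAc hBc hBd hdisj
    obtain ⟨L, hLc, hL01, hLeq⟩ := extend_from_compact (hQcl 0) h hc h01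
    refine ⟨L, ⟨hLc, hL01, ?_⟩, ?_, ?_⟩
    · intro a b hab haQ hbQ
      have hmm := hm ⟨a, haQ⟩ ⟨b, hbQ⟩ hab
      rw [show L a = h ⟨a, haQ⟩ from hLeq ⟨a, haQ⟩, show L b = h ⟨b, hbQ⟩ from hLeq ⟨b, hbQ⟩]
      exact hmm
    · rw [show L x = h ⟨x, hQx⟩ from hLeq ⟨x, hQx⟩]
      exact h0 _ (hrefl x)
    · rw [show L y = h ⟨y, hQy⟩ from hLeq ⟨y, hQy⟩]
      exact h1 _ (hrefl y)
  -- inductive step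
  have hstep : ∀ n (L : X → ℝ), Good n L → ∃ L' : X → ℝ, Good (n+1) L' ∧
      ∀ z ∈ Q n, |L' z - L z| ≤ (1:ℝ)/2^(n+3) := by
    intro n L hGL
    obtain ⟨hLc, hL01, hLm⟩ := hGL
    haveI : CompactSpace ↥(Q (n+1)) := isCompact_iff_compactSpace.1 (hQc (n+1))
    set E1 : Set (↥(Q (n+1)) × ↥(Q (n+1))) := {p | ((p.1 : X), (p.2 : X)) ∈ D} with hE1
    have hE1c : IsClosed E1 := by
      have he : E1 = (fun p : ↥(Q (n+1)) × ↥(Q (n+1)) => ((p.1 : X), (p.2 : X))) ⁻¹' D := rfl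
      rw [he]
      exact hclosed.preimage ((continuous_subtype_val.comp continuous_fst).prodMk
        (continuous_subtype_val.comp continuous_snd))
    have htr1 : ∀ a b c : ↥(Q (n+1)), (a, b) ∈ E1 → (b, c) ∈ E1 → (a, c) ∈ E1 :=
      fun a b c h1 h2 => htrans _ _ _ h1 h2
    set P : Set ↥(Q (n+1)) := {z | (z : X) ∈ Q n} with hP
    have hPc : IsClosed P := (hQcl n).preimage continuous_subtype_val
    have hfm : ∀ a b : ↥(Q (n+1)), (a, b) ∈ E1 → a ∈ P → b ∈ P →
        L (b : X) ≤ L (a : X) := fun a b hab ha hb => hLm _ _ hab ha hb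
    obtain ⟨g, hgc, hg01, hgm, hgP⟩ := approx_mono_extend E1 hE1c htr1 hPc
      (fun z => L (z : X)) (hLc.comp continuous_subtype_val) (fun z => hL01 _) hfm
      (2^(n+3)) (by positivity)
    obtain ⟨L', hL'c, hL'01, hL'eq⟩ := extend_from_compact (hQcl (n+1)) g hgc hg01
    have hcast : ((2^(n+3) : ℕ) : ℝ) = 2^(n+3) := by push_cast; ring
    refine ⟨L', ⟨hL'c, hL'01, ?_⟩, ?_⟩
    · intro a b hab haQ hbQ
      have hmm := hgm ⟨a, haQ⟩ ⟨b, hbQ⟩ hab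
      rw [show L' a = g ⟨a, haQ⟩ from hL'eq ⟨a, haQ⟩, show L' b = g ⟨b, hbQ⟩ from hL'eq ⟨b, hbQ⟩]
      exact hmm
    · intro z hz
      have hz1 : z ∈ Q (n+1) := hQmono n (n+1) (by omega) hz
      have hP1 : (⟨z, hz1⟩ : ↥(Q (n+1))) ∈ P := hz
      have hb := hgP ⟨z, hz1⟩ hP1
      rw [show L' z = g ⟨z, hz1⟩ from hL'eq ⟨z, hz1⟩]
      rw [hcast] at hb
      exact hb
  obtain ⟨L0, hGood0, hL0x, hL0y⟩ := hbase
  choose stepF hstepF1 hstepF2 using hstep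
  let seq : ∀ n : ℕ, {L : X → ℝ // Good n L} := fun n =>
    Nat.rec ⟨L0, hGood0⟩ (fun n p => ⟨stepF n p.1 p.2, hstepF1 n p.1 p.2⟩) n
  have hseqstep : ∀ n, ∀ z ∈ Q n, |(seq (n+1)).1 z - (seq n).1 z| ≤ (1:ℝ)/2^(n+3) :=
    fun n => hstepF2 n (seq n).1 (seq n).2
  have hseq0 : (seq 0).1 = L0 := rfl
  -- tail estimates
  have htail : ∀ N (z : X), z ∈ Q N → ∀ n m : ℕ, N ≤ n → n ≤ m →
      |(seq m).1 z - (seq n).1 z| ≤ (1:ℝ)/2^(n+2) - 1/2^(m+2) := by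
    intro N z hz n m hNn hnm
    obtain ⟨d, rfl⟩ : ∃ d, m = n + d := ⟨m - n, by omega⟩
    clear hnm
    induction d with
    | zero => simp
    | succ d ih =>
      have h1 := hseqstep (n+d) z (hQmono N (n+d) (by omega) hz)
      have h2 := ih
      have e1 : n + (d+1) = (n + d) + 1 := by omega
      rw [e1]
      have habs := abs_sub_le ((seq (n+d+1)).1 z) ((seq (n+d)).1 z) ((seq n).1 z)
      have e2 : (1:ℝ)/2^(n+d+2) = 2/2^(n+d+3) := by
        have e : (2:ℝ)^(n+d+3) = 2*2^(n+d+2) := by ring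
        rw [e]
        have hp : (0:ℝ) < 2^(n+d+2) := by positivity
        field_simp
      have e3 : (1:ℝ)/2^(n+(d+1)+2) = 1/2^(n+d+3) := by norm_num; ring_nf
      calc |(seq (n+d+1)).1 z - (seq n).1 z|
          ≤ |(seq (n+d+1)).1 z - (seq (n+d)).1 z| + |(seq (n+d)).1 z - (seq n).1 z| := habs
        _ ≤ (1:ℝ)/2^(n+d+3) + (1/2^(n+2) - 1/2^(n+d+2)) := add_le_add h1 h2
        _ ≤ 1/2^(n+2) - 1/2^((n+d)+1+2) := by
            rw [show (n+d)+1+2 = n+d+3 from by omega]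
            rw [e2]
            have e4 : (2:ℝ)/2^(n+d+3) = 2*(1/2^(n+d+3)) := by ring
            linarith
  -- convergence
  have hcauchy : ∀ z : X, ∃ l : ℝ, Tendsto (fun n => (seq n).1 z) atTop (𝓝 l) := by
    intro z
    obtain ⟨N, hzN⟩ := hQall z
    refine cauchySeq_tendsto_of_complete ?_
    rw [Metric.cauchySeq_iff']
    intro ε hε
    obtain ⟨k, hk⟩ := exists_pow_lt_of_lt_one hε (show (1:ℝ)/2 < 1 by norm_num)
    have hk' : (1:ℝ)/2^(k+2) < ε := by
      rw [div_pow, one_pow] at hk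
      refine lt_of_le_of_lt ?_ hk
      have h2 : (2:ℝ)^k ≤ 2^(k+2) := by
        apply pow_le_pow_right₀ (by norm_num)
        omega
      have hp : (0:ℝ) < 2^k := by positivity
      apply div_le_div_of_nonneg_left (by norm_num) hp h2
    refine ⟨max N k, fun n hn => ?_⟩
    have h1 := htail N z hzN (max N k) n (le_max_left _ _) hn
    rw [Real.dist_eq]
    have hp1 : (0:ℝ) < 1/2^(n+2) := by positivity
    have h2 : (1:ℝ)/2^(max N k + 2) ≤ 1/2^(k+2) := by
      have h3 : (2:ℝ)^(k+2) ≤ 2^(max N k+2) := by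
        apply pow_le_pow_right₀ (by norm_num)
        have := le_max_right N k
        omega
      apply div_le_div_of_nonneg_left (by norm_num) (by positivity) h3
    linarith
  choose Lf hLf using hcauchy
  have hLb : ∀ N (z : X), z ∈ Q N → ∀ n, N ≤ n → |Lf z - (seq n).1 z| ≤ (1:ℝ)/2^(n+2) := by
    intro N z hzN n hNn
    have htd : Tendsto (fun m => |(seq m).1 z - (seq n).1 z|) atTop
        (𝓝 |Lf z - (seq n).1 z|) := ((hLf z).sub tendsto_const_nhds).abs
    refine le_of_tendsto htd ?_
    refine eventually_atTop.2 ⟨n, fun m hm => ?_⟩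
    have := htail N z hzN n m hNn hm
    have hp : (0:ℝ) < 1/2^(m+2) := by positivity
    linarith
  refine ⟨Lf, ?_, ?_, ?_⟩
  · -- continuity
    rw [continuous_iff_continuousAt]
    intro z
    obtain ⟨m, hzm⟩ := hQall z
    have hTU : TendstoUniformlyOn (fun n w => (seq n).1 w) Lf atTop (Q (m+1)) := by
      rw [Metric.tendstoUniformlyOn_iff]
      intro ε hε
      obtain ⟨k, hk⟩ := exists_pow_lt_of_lt_one hε (show (1:ℝ)/2 < 1 by norm_num)
      have hk' : (1:ℝ)/2^(k+2) < ε := by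
        rw [div_pow, one_pow] at hk
        refine lt_of_le_of_lt ?_ hk
        have h2 : (2:ℝ)^k ≤ 2^(k+2) := by
          apply pow_le_pow_right₀ (by norm_num)
          omega
        apply div_le_div_of_nonneg_left (by norm_num) (by positivity) h2
      refine eventually_atTop.2 ⟨max (m+1) k, fun n hn w hw => ?_⟩
      have h1 : |Lf w - (seq n).1 w| ≤ (1:ℝ)/2^(n+2) :=
        hLb (m+1) w hw n (le_trans (le_max_left _ _) hn)
      rw [Real.dist_eq]
      have h2 : (1:ℝ)/2^(n+2) ≤ 1/2^(k+2) := by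
        have h3 : (2:ℝ)^(k+2) ≤ 2^(n+2) := by
          apply pow_le_pow_right₀ (by norm_num)
          have := le_max_right (m+1) k
          omega
        apply div_le_div_of_nonneg_left (by norm_num) (by positivity) h3
      calc |Lf w - (seq n).1 w| ≤ (1:ℝ)/2^(n+2) := h1
        _ ≤ 1/2^(k+2) := h2
        _ < ε := hk'
    have hco : ContinuousOn Lf (Q (m+1)) :=
      hTU.continuousOn (Frequently.of_forall fun n => ((seq n).2.1).continuousOn)
    exact hco.continuousAt (mem_interior_iff_mem_nhds.1 (hQint m hzm))
  · -- Lyapunov property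
    rintro ⟨a, b⟩ hab
    obtain ⟨Na, hNa⟩ := hQall a
    obtain ⟨Nb, hNb⟩ := hQall b
    have hmono : ∀ n, max Na Nb ≤ n → (seq n).1 b ≤ (seq n).1 a := by
      intro n hn
      exact (seq n).2.2.2 a b hab (hQmono Na n (by omega) hNa) (hQmono Nb n (by omega) hNb)
    exact le_of_tendsto_of_tendsto (hLf b) (hLf a)
      (eventually_atTop.2 ⟨max Na Nb, hmono⟩)
  · -- separation
    have hx4 : |Lf x - (seq 0).1 x| ≤ (1:ℝ)/2^2 := hLb 0 x hQx 0 le_rfl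
    have hy4 : |Lf y - (seq 0).1 y| ≤ (1:ℝ)/2^2 := hLb 0 y hQy 0 le_rfl
    rw [hseq0, hL0x] at hx4
    rw [hseq0, hL0y] at hy4
    rw [abs_le] at hx4 hy4
    obtain ⟨hx1, hx2⟩ := hx4
    obtain ⟨hy1, hy2⟩ := hy4
    norm_num at hx1 hx2 hy1 hy2
    linarith

end Main
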